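/- The operator logarithmic derivative with respect to r, defined by L₁ = ∫₀^π ∫₀^{2π} (∂/∂r)[log Q(r,θ,φ;θ₁,φ₁)] · Δ(θ₁,φ₁,1) · (sinθ₁/(2π)) dφ₁ dθ₁, equals (1/(2r³))·(2r + log((1-r)/(1+r))) · [[r-3cosθ, -3e^{-iφ}sinθ],[-3e^{iφ}sinθ, r+3cosθ]], for 0 < r < 1. -/

import Mathlib

open Real Matrix MeasureTheory

noncomputable def husimiQ (r θ φ θ₁ φ₁ : ℝ) : ℝ :=
  (1 / 2) * (1 + r * Real.cos θ₁ * Real.cos θ + r * Real.cos (φ₁ - φ) * Real.sin θ₁ * Real.sin θ)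

/-- The Stratonovich–Weyl kernel with ordering parameter `s = 1`. -/
noncomputable def swKernelOne (θ φ : ℝ) : Matrix (Fin 2) (Fin 2) ℂ :=
  (1 / 2 : ℂ) •
    !![(1 + 3 * Real.cos θ : ℂ), 3 * Complex.exp (-Complex.I * φ) * Real.sin θ;
       3 * Complex.exp (Complex.I * φ) * Real.sin θ, (1 - 3 * Real.cos θ : ℂ)]

/-- The claimed closed form of the operator logarithmic derivative `L₁`. -/
noncomputable def L1 (r θ φ : ℝ) : Matrix (Fin 2) (Fin 2) ℂ :=
  ((1 / (2 * r ^ 3) * (2 * r + Real.log ((1 - r) / (1 + r))) : ℝ) : ℂ) •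
    !![(r - 3 * Real.cos θ : ℂ), -3 * Complex.exp (-Complex.I * φ) * Real.sin θ;
       -3 * Complex.exp (Complex.I * φ) * Real.sin θ, (r + 3 * Real.cos θ : ℂ)]

open intervalIntegral

set_option maxHeartbeats 1000000


lemma core_int (p q : ℝ) (hq : |q| < p) :
    ∫ x in (0:ℝ)..(2*π), (p + q * Real.cos x)⁻¹ = 2 * π / Real.sqrt (p^2 - q^2) := by
  have hp : 0 < p := lt_of_le_of_lt (abs_nonneg q) hq
  have hq2 : q^2 < p^2 := by
    calc q^2 = |q|^2 := (sq_abs q).symm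
    _ < p^2 := by nlinarith [abs_nonneg q]
  set s := Real.sqrt (p^2 - q^2) with hsdef
  have hs2 : s^2 = p^2 - q^2 := Real.sq_sqrt (by linarith)
  have hs : 0 < s := Real.sqrt_pos.mpr (by linarith)
  have hpos : ∀ x : ℝ, 0 < p + q * Real.cos x := by
    intro x
    have : |q * Real.cos x| ≤ |q| := by
      rw [abs_mul]
      exact mul_le_of_le_one_right (abs_nonneg q) (abs_cos_le_one x)
    have := abs_le.mp this
    linarith [this.1]
  have hD : ∀ x : ℝ, 0 < p + s + q * Real.cos x := by
    intro x; have := hpos x; linarith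
  set F : ℝ → ℝ := fun x => (x - 2 * Real.arctan (q * Real.sin x / (p + s + q * Real.cos x))) / s
  have hder : ∀ x : ℝ, HasDerivAt F ((p + q * Real.cos x)⁻¹) x := by
    intro x
    have hDx := hD x
    have h1 : HasDerivAt (fun x : ℝ => q * Real.sin x) (q * Real.cos x) x :=
      (Real.hasDerivAt_sin x).const_mul q
    have h2 : HasDerivAt (fun x : ℝ => p + s + q * Real.cos x) (q * (-Real.sin x)) x := by
      simpa using ((Real.hasDerivAt_cos x).const_mul q).const_add (p + s)
    have h3 := (h1.div h2 (ne_of_gt hDx))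
    have h4 := h3.arctan
    have h5 := ((hasDerivAt_id x).sub (h4.const_mul 2)).div_const s
    refine h5.congr_deriv (Eq.symm ?_)
    have hsc : Real.sin x ^ 2 + Real.cos x ^ 2 = 1 := Real.sin_sq_add_cos_sq x
    have hnum : q * Real.cos x * (p + s + q * Real.cos x) - q * Real.sin x * (q * (-Real.sin x))
        = q * (p + s) * Real.cos x + q^2 := by linear_combination q^2 * hsc
    have key : 1 + (q * Real.sin x / (p + s + q * Real.cos x))^2 =
        2 * (p + s) * (p + q * Real.cos x) / (p + s + q * Real.cos x)^2 := by
      field_simp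
      linear_combination q^2 * hsc + hs2
    have hne : (p + q * Real.cos x) ≠ 0 := ne_of_gt (hpos x)
    have hps : (0:ℝ) < p + s := by linarith
    rw [hnum]
    simp only [Pi.div_apply]
    rw [key]
    have e1 : 1 / (2*(p+s)*(p+q*Real.cos x)/ (p+s+q*Real.cos x)^2) *
        ((q*(p+s)*Real.cos x + q^2)/(p+s+q*Real.cos x)^2)
        = (q*(p+s)*Real.cos x + q^2) / (2*(p+s)*(p+q*Real.cos x)) := by
      field_simp
    rw [e1]
    have e2 : 1 - 2*((q*(p+s)*Real.cos x + q^2)/(2*(p+s)*(p+q*Real.cos x))) = s/(p+q*Real.cos x) := by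
      field_simp
      linear_combination (-1) * hs2
    rw [e2]
    rw [div_div, inv_eq_one_div]
    rw [div_eq_div_iff hne (by positivity)]
    ring
  have hcont : Continuous fun x => (p + q * Real.cos x)⁻¹ :=
    Continuous.inv₀ (by continuity) (fun x => ne_of_gt (hpos x))
  have := intervalIntegral.integral_eq_sub_of_hasDerivAt (f := F)
    (fun x _ => hder x) (hcont.intervalIntegrable 0 (2*π))
  rw [this]
  show (2*π - 2 * Real.arctan (q * Real.sin (2*π) / (p + s + q * Real.cos (2*π)))) / s
      - (0 - 2 * Real.arctan (q * Real.sin 0 / (p + s + q * Real.cos 0))) / s = 2 * π / s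
  rw [Real.sin_two_pi, Real.sin_zero]
  norm_num


lemma abs_cc_ss (a b : ℝ) : |Real.cos a * Real.cos b| + |Real.sin a * Real.sin b| ≤ 1 := by
  have h1 := Real.sin_sq_add_cos_sq a
  have h2 := Real.sin_sq_add_cos_sq b
  have := sq_abs (Real.cos a); have := sq_abs (Real.cos b)
  have := sq_abs (Real.sin a); have := sq_abs (Real.sin b)
  nlinarith [sq_nonneg (|Real.cos a| * |Real.sin b| - |Real.sin a| * |Real.cos b|),
    abs_nonneg (Real.cos a * Real.cos b), abs_nonneg (Real.sin a * Real.sin b),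
    abs_mul (Real.cos a) (Real.cos b), abs_mul (Real.sin a) (Real.sin b),
    sq_nonneg (|Real.cos a| * |Real.cos b| + |Real.sin a| * |Real.sin b|)]

lemma shift_per (f : ℝ → ℝ) (hf : Function.Periodic f (2*π)) (φ : ℝ) :
    ∫ x in (0:ℝ)..(2*π), f (x - φ) = ∫ x in (0:ℝ)..(2*π), f x := by
  rw [intervalIntegral.integral_comp_sub_right]
  rw [show (2*π - φ) = -φ + (2*π) from by ring, show ((0:ℝ) - φ) = -φ from by ring]
  simpa using hf.intervalIntegral_add_eq (-φ) 0

lemma core_cos (p q : ℝ) (hq : |q| < p) :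
    ∫ x in (0:ℝ)..(2*π), Real.cos x / (p + q * Real.cos x)
      = -(2*π)*q / (Real.sqrt (p^2-q^2) * (p + Real.sqrt (p^2-q^2))) := by
  have hp : 0 < p := lt_of_le_of_lt (abs_nonneg q) hq
  have hq2 : q^2 < p^2 := by
    calc q^2 = |q|^2 := (sq_abs q).symm
    _ < p^2 := by nlinarith [abs_nonneg q]
  set s := Real.sqrt (p^2 - q^2) with hsdef
  have hs2 : s^2 = p^2 - q^2 := Real.sq_sqrt (by linarith)
  have hs : 0 < s := Real.sqrt_pos.mpr (by linarith)
  have hpos : ∀ x : ℝ, 0 < p + q * Real.cos x := by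
    intro x
    have : |q * Real.cos x| ≤ |q| := by
      rw [abs_mul]; exact mul_le_of_le_one_right (abs_nonneg q) (abs_cos_le_one x)
    have := abs_le.mp this
    linarith [this.1]
  rcases eq_or_ne q 0 with hq0 | hq0
  · subst hq0
    simp only [zero_mul, add_zero]
    rw [intervalIntegral.integral_div, integral_cos]
    simp
  · have key : ∀ x : ℝ, Real.cos x / (p + q * Real.cos x)
        = 1/q - (p/q) * (p + q * Real.cos x)⁻¹ := by
      intro x
      have h : p + Real.cos x * q ≠ 0 := by rw [mul_comm]; exact ne_of_gt (hpos x)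
      field_simp
      ring
    rw [intervalIntegral.integral_congr (g := fun x => 1/q - (p/q) * (p + q * Real.cos x)⁻¹)
      (fun x _ => key x)]
    have hcont : Continuous fun x => (p + q * Real.cos x)⁻¹ :=
      Continuous.inv₀ (by continuity) (fun x => ne_of_gt (hpos x))
    rw [intervalIntegral.integral_sub (g := fun x => p/q * (p + q * Real.cos x)⁻¹)
      (intervalIntegrable_const)
      ((continuous_const.mul hcont).intervalIntegrable 0 (2*π))]
    rw [intervalIntegral.integral_const_mul, core_int p q hq, intervalIntegral.integral_const]
    rw [← hsdef, smul_eq_mul]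
    have : p + s ≠ 0 := by positivity
    field_simp
    linear_combination (2*π) * hs2


noncomputable def Pa (r θ θ₁ : ℝ) : ℝ := 1 + r * Real.cos θ * Real.cos θ₁
noncomputable def Qa (r θ θ₁ : ℝ) : ℝ := r * Real.sin θ * Real.sin θ₁
noncomputable def Sa (r θ θ₁ : ℝ) : ℝ := Real.sqrt (Pa r θ θ₁ ^ 2 - Qa r θ θ₁ ^ 2)
noncomputable def Af (θ φ θ₁ φ₁ : ℝ) : ℝ :=
  Real.cos θ₁ * Real.cos θ + Real.cos (φ₁ - φ) * Real.sin θ₁ * Real.sin θ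

lemma Qa_lt_Pa (r θ θ₁ : ℝ) (hr : 0 < r) (hr1 : r < 1) :
    |Qa r θ θ₁| + (1 - r) ≤ Pa r θ θ₁ := by
  unfold Qa Pa
  have h := abs_cc_ss θ₁ θ
  have h2 := neg_abs_le (Real.cos θ₁ * Real.cos θ)
  have e1 : |r * Real.sin θ * Real.sin θ₁| = r * |Real.sin θ₁ * Real.sin θ| := by
    rw [show r * Real.sin θ * Real.sin θ₁ = r * (Real.sin θ₁ * Real.sin θ) from by ring,
      abs_mul, abs_of_pos hr]
  have e2 : r * Real.cos θ * Real.cos θ₁ = r * (Real.cos θ₁ * Real.cos θ) := by ring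
  rw [e1, e2]
  nlinarith [abs_nonneg (Real.sin θ₁ * Real.sin θ)]

lemma Qa_lt_Pa' (r θ θ₁ : ℝ) (hr : 0 < r) (hr1 : r < 1) : |Qa r θ θ₁| < Pa r θ θ₁ := by
  have := Qa_lt_Pa r θ θ₁ hr hr1; linarith

lemma Sa_ge (r θ θ₁ : ℝ) (hr : 0 < r) (hr1 : r < 1) : 1 - r ≤ Sa r θ θ₁ := by
  have h := Qa_lt_Pa r θ θ₁ hr hr1
  have h0 := abs_nonneg (Qa r θ θ₁)
  have h1 : (1-r)^2 ≤ Pa r θ θ₁ ^ 2 - Qa r θ θ₁ ^ 2 := by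
    have := sq_abs (Qa r θ θ₁); nlinarith
  calc 1 - r = Real.sqrt ((1-r)^2) := by
        rw [Real.sqrt_sq (by linarith)]
    _ ≤ Sa r θ θ₁ := Real.sqrt_le_sqrt h1

lemma Sa_pos (r θ θ₁ : ℝ) (hr : 0 < r) (hr1 : r < 1) : 0 < Sa r θ θ₁ :=
  lt_of_lt_of_le (by linarith) (Sa_ge r θ θ₁ hr hr1)

lemma one_add_rAf (r θ φ θ₁ φ₁ : ℝ) :
    1 + r * Af θ φ θ₁ φ₁ = Pa r θ θ₁ + Qa r θ θ₁ * Real.cos (φ₁ - φ) := by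
  unfold Af Pa Qa; ring

lemma one_add_rAf_pos (r θ φ θ₁ φ₁ : ℝ) (hr : 0 < r) (hr1 : r < 1) :
    0 < 1 + r * Af θ φ θ₁ φ₁ := by
  rw [one_add_rAf]
  have h := Qa_lt_Pa r θ θ₁ hr hr1
  have : |Qa r θ θ₁ * Real.cos (φ₁ - φ)| ≤ |Qa r θ θ₁| := by
    rw [abs_mul]; exact mul_le_of_le_one_right (abs_nonneg _) (abs_cos_le_one _)
  have := abs_le.mp this
  linarith [this.1]

lemma cos_per (c : ℝ → ℝ) : Function.Periodic (fun x : ℝ => c (Real.cos x)) (2*π) :=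
  fun x => by simp [Real.cos_add_two_pi]

lemma inner0 (r θ φ θ₁ : ℝ) (hr : 0 < r) (hr1 : r < 1) :
    ∫ φ₁ in (0:ℝ)..(2*π), Af θ φ θ₁ φ₁ / (1 + r * Af θ φ θ₁ φ₁)
      = 2*π/r - (2*π/r) / Sa r θ θ₁ := by
  have hPQ := Qa_lt_Pa' r θ θ₁ hr hr1
  have hpos := fun φ₁ => one_add_rAf_pos r θ φ θ₁ φ₁ hr hr1
  have key : ∀ x : ℝ, Af θ φ θ₁ x / (1 + r * Af θ φ θ₁ x)
      = 1/r - (1/r) * (Pa r θ θ₁ + Qa r θ θ₁ * Real.cos (x - φ))⁻¹ := by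
    intro x
    have h1 := one_add_rAf r θ φ θ₁ x
    have h2 := hpos x
    rw [← h1]
    have h3 : (1 + Af θ φ θ₁ x * r) ≠ 0 := by rw [mul_comm]; exact ne_of_gt h2
    field_simp
    ring
  rw [intervalIntegral.integral_congr (fun x _ => key x)]
  have hposc : ∀ x : ℝ, 0 < Pa r θ θ₁ + Qa r θ θ₁ * Real.cos x := by
    intro x
    have := one_add_rAf r θ φ θ₁ (x + φ)
    have h2 := hpos (x + φ)
    simp at this
    rw [this] at h2; exact h2
  have hcont : Continuous fun x => (Pa r θ θ₁ + Qa r θ θ₁ * Real.cos x)⁻¹ :=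
    Continuous.inv₀ (by continuity) (fun x => ne_of_gt (hposc x))
  have hc2 : Continuous fun x : ℝ => (1/r) * (Pa r θ θ₁ + Qa r θ θ₁ * Real.cos (x - φ))⁻¹ :=
    continuous_const.mul (Continuous.inv₀ (by continuity) (fun x => ne_of_gt (hposc (x - φ))))
  rw [intervalIntegral.integral_sub intervalIntegrable_const (hc2.intervalIntegrable 0 (2*π))]
  have hshift : (∫ x in (0:ℝ)..(2*π), (1/r) * (Pa r θ θ₁ + Qa r θ θ₁ * Real.cos (x - φ))⁻¹)
      = (1/r) * ∫ x in (0:ℝ)..(2*π), (Pa r θ θ₁ + Qa r θ θ₁ * Real.cos x)⁻¹ := by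
    rw [← intervalIntegral.integral_const_mul]
    exact shift_per (fun x => (1/r) * (Pa r θ θ₁ + Qa r θ θ₁ * Real.cos x)⁻¹)
      (cos_per (fun u => (1/r) * (Pa r θ θ₁ + Qa r θ θ₁ * u)⁻¹)) φ
  rw [hshift, core_int _ _ hPQ, intervalIntegral.integral_const]
  show (2*π - 0) • (1/r) - 1/r * (2*π / Sa r θ θ₁) = _
  rw [smul_eq_mul]
  have hS := Sa_pos r θ θ₁ hr hr1
  field_simp
  ring


lemma innerC (r θ φ θ₁ : ℝ) (hr : 0 < r) (hr1 : r < 1) :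
    ∫ φ₁ in (0:ℝ)..(2*π), (Af θ φ θ₁ φ₁ / (1 + r * Af θ φ θ₁ φ₁)) * Real.cos (φ₁ - φ)
      = 2*π*Qa r θ θ₁ / (r * Sa r θ θ₁ * (Pa r θ θ₁ + Sa r θ θ₁)) := by
  have hPQ := Qa_lt_Pa' r θ θ₁ hr hr1
  have hpos := fun φ₁ => one_add_rAf_pos r θ φ θ₁ φ₁ hr hr1
  have hposc : ∀ x : ℝ, 0 < Pa r θ θ₁ + Qa r θ θ₁ * Real.cos x := by
    intro x
    have h1 := one_add_rAf r θ φ θ₁ (x + φ)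
    have h2 := hpos (x + φ)
    simp at h1
    rw [h1] at h2; exact h2
  have key : ∀ x : ℝ, (Af θ φ θ₁ x / (1 + r * Af θ φ θ₁ x)) * Real.cos (x - φ)
      = (1/r) * Real.cos (x - φ)
        - (1/r) * (Real.cos (x - φ) / (Pa r θ θ₁ + Qa r θ θ₁ * Real.cos (x - φ))) := by
    intro x
    have h1 := one_add_rAf r θ φ θ₁ x
    have h2 := hpos x
    rw [← h1]
    have h3 : (1 + Af θ φ θ₁ x * r) ≠ 0 := by rw [mul_comm]; exact ne_of_gt h2
    field_simp
    ring
  rw [intervalIntegral.integral_congr (fun x _ => key x)]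
  have hc1 : Continuous fun x : ℝ => (1/r) * Real.cos (x - φ) := by continuity
  have hc2 : Continuous fun x : ℝ =>
      (1/r) * (Real.cos (x - φ) / (Pa r θ θ₁ + Qa r θ θ₁ * Real.cos (x - φ))) :=
    continuous_const.mul (Continuous.div (by continuity) (by continuity)
      (fun x => ne_of_gt (hposc (x - φ))))
  rw [intervalIntegral.integral_sub (hc1.intervalIntegrable 0 (2*π)) (hc2.intervalIntegrable 0 (2*π))]
  have e1 : (∫ x in (0:ℝ)..(2*π), (1/r) * Real.cos (x - φ)) = 0 := by
    rw [shift_per (fun x => (1/r) * Real.cos x) (cos_per (fun u => (1/r) * u)) φ]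
    rw [intervalIntegral.integral_const_mul, integral_cos]
    simp
  have e2 : (∫ x in (0:ℝ)..(2*π),
      (1/r) * (Real.cos (x - φ) / (Pa r θ θ₁ + Qa r θ θ₁ * Real.cos (x - φ))))
      = (1/r) * (-(2*π)*Qa r θ θ₁ / (Sa r θ θ₁ * (Pa r θ θ₁ + Sa r θ θ₁))) := by
    rw [shift_per (fun x => (1/r) * (Real.cos x / (Pa r θ θ₁ + Qa r θ θ₁ * Real.cos x)))
      (by intro x; simp [Real.cos_add_two_pi]) φ]
    rw [intervalIntegral.integral_const_mul, core_cos _ _ hPQ]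
    rfl
  rw [e1, e2]
  have hS := Sa_pos r θ θ₁ hr hr1
  have hP : 0 < Pa r θ θ₁ := lt_of_le_of_lt (abs_nonneg _) hPQ
  have : Pa r θ θ₁ + Sa r θ θ₁ ≠ 0 := by positivity
  field_simp
  ring

lemma innerS (r θ φ θ₁ : ℝ) (hr : 0 < r) (hr1 : r < 1) :
    ∫ φ₁ in (0:ℝ)..(2*π), (Af θ φ θ₁ φ₁ / (1 + r * Af θ φ θ₁ φ₁)) * Real.sin (φ₁ - φ) = 0 := by
  set G : ℝ → ℝ := fun x =>
    ((Real.cos θ₁ * Real.cos θ + Real.cos x * Real.sin θ₁ * Real.sin θ) /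
      (1 + r * (Real.cos θ₁ * Real.cos θ + Real.cos x * Real.sin θ₁ * Real.sin θ))) * Real.sin x
    with hG
  have hint : ∀ x : ℝ, (Af θ φ θ₁ x / (1 + r * Af θ φ θ₁ x)) * Real.sin (x - φ) = G (x - φ) := by
    intro x; simp only [hG, Af]
  rw [intervalIntegral.integral_congr (fun x _ => hint x)]
  have hGper : Function.Periodic G (2*π) := by
    intro x; simp only [hG, Real.cos_add_two_pi, Real.sin_add_two_pi]
  rw [shift_per G hGper φ]
  have hrefl : (∫ x in (0:ℝ)..(2*π), G (2*π - x)) = ∫ x in (0:ℝ)..(2*π), G x := by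
    rw [intervalIntegral.integral_comp_sub_left]
    norm_num
  have hodd : ∀ x : ℝ, G (2*π - x) = - G x := by
    intro x
    simp only [hG, Real.cos_sub, Real.sin_sub, Real.cos_two_pi, Real.sin_two_pi]
    ring_nf
  have : (∫ x in (0:ℝ)..(2*π), G x) = - ∫ x in (0:ℝ)..(2*π), G x := by
    nth_rewrite 1 [← hrefl]
    rw [intervalIntegral.integral_congr (fun x _ => hodd x), intervalIntegral.integral_neg]
  linarith


lemma W_pos (r θ θ₁ : ℝ) (hr : 0 < r) (hr1 : r < 1) :
    0 < Pa r θ θ₁ ^ 2 - Qa r θ θ₁ ^ 2 := by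
  have h := Sa_ge r θ θ₁ hr hr1
  have h1 := Qa_lt_Pa r θ θ₁ hr hr1
  nlinarith [abs_nonneg (Qa r θ θ₁), sq_abs (Qa r θ θ₁)]

lemma Sa_sq (r θ θ₁ : ℝ) (hr : 0 < r) (hr1 : r < 1) :
    Sa r θ θ₁ ^ 2 = Pa r θ θ₁ ^ 2 - Qa r θ θ₁ ^ 2 := by
  unfold Sa
  rw [Real.sq_sqrt (le_of_lt (W_pos r θ θ₁ hr hr1))]

lemma Sa_diff_sq (r θ θ₁ : ℝ) (hr : 0 < r) (hr1 : r < 1) :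
    Sa r θ θ₁ ^ 2 - (r * Real.cos θ₁ + Real.cos θ)^2
      = (1 - r^2) * (1 - Real.cos θ ^ 2) := by
  rw [Sa_sq r θ θ₁ hr hr1]
  unfold Pa Qa
  have h1 : Real.sin θ ^ 2 = 1 - Real.cos θ ^ 2 := Real.sin_sq θ
  have h2 : Real.sin θ₁ ^ 2 = 1 - Real.cos θ₁ ^ 2 := Real.sin_sq θ₁
  calc (1 + r * Real.cos θ * Real.cos θ₁)^2 - (r * Real.sin θ * Real.sin θ₁)^2
        - (r * Real.cos θ₁ + Real.cos θ)^2
      = (1 + r * Real.cos θ * Real.cos θ₁)^2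
        - r^2 * (1 - Real.cos θ^2) * (1 - Real.cos θ₁^2)
        - (r * Real.cos θ₁ + Real.cos θ)^2 := by
        rw [show (r * Real.sin θ * Real.sin θ₁)^2 = r^2 * Real.sin θ^2 * Real.sin θ₁^2 from by ring,
          h1, h2]
    _ = (1 - r^2) * (1 - Real.cos θ ^ 2) := by ring

lemma D_pos (r θ θ₁ : ℝ) (hr : 0 < r) (hr1 : r < 1) (hk : -1 < Real.cos θ) :
    0 < r * Real.cos θ₁ + Real.cos θ + Sa r θ θ₁ := by
  have hSpos := Sa_pos r θ θ₁ hr hr1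
  have hsq := Sa_diff_sq r θ θ₁ hr hr1
  by_contra hcon
  push_neg at hcon
  have h1 : r * Real.cos θ₁ + Real.cos θ ≤ -Sa r θ θ₁ := by linarith
  have hk1 : Real.cos θ ≤ 1 := Real.cos_le_one θ
  have hc1 : -1 ≤ Real.cos θ₁ := Real.neg_one_le_cos θ₁
  rcases eq_or_lt_of_le hk1 with hke | hklt
  · nlinarith
  · have e1 : (0:ℝ) < 1 - r^2 := by nlinarith
    have e2 : (0:ℝ) < 1 - Real.cos θ^2 := by
      nlinarith [mul_pos (show (0:ℝ) < 1 - Real.cos θ from by linarith)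
        (show (0:ℝ) < 1 + Real.cos θ from by linarith)]
    have hpos2 : (0:ℝ) < (1 - r^2) * (1 - Real.cos θ^2) := mul_pos e1 e2
    have hprod : 0 ≤ (Sa r θ θ₁ - (r * Real.cos θ₁ + Real.cos θ))
        * (-(r * Real.cos θ₁ + Real.cos θ + Sa r θ θ₁)) :=
      mul_nonneg (by linarith) (by linarith)
    nlinarith

lemma hasDerivAt_W (r θ θ₁ : ℝ) :
    HasDerivAt (fun x => Pa r θ x ^ 2 - Qa r θ x ^ 2)
      (2 * Pa r θ θ₁ * (r * Real.cos θ * (-Real.sin θ₁))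
        - 2 * Qa r θ θ₁ * (r * Real.sin θ * Real.cos θ₁)) θ₁ := by
  have hP : HasDerivAt (fun x => Pa r θ x) (r * Real.cos θ * (-Real.sin θ₁)) θ₁ := by
    unfold Pa
    simpa [mul_assoc] using
      (((Real.hasDerivAt_cos θ₁).const_mul (r * Real.cos θ)).const_add 1)
  have hQ : HasDerivAt (fun x => Qa r θ x) (r * Real.sin θ * Real.cos θ₁) θ₁ := by
    unfold Qa
    simpa [mul_assoc] using ((Real.hasDerivAt_sin θ₁).const_mul (r * Real.sin θ))
  have := (hP.pow 2).sub (hQ.pow 2)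
  refine this.congr_deriv (Eq.symm ?_)
  ring

lemma hasDerivAt_Sa (r θ θ₁ : ℝ) (hr : 0 < r) (hr1 : r < 1) :
    HasDerivAt (fun x => Sa r θ x)
      (-(r * Real.sin θ₁ * (r * Real.cos θ₁ + Real.cos θ)) / Sa r θ θ₁) θ₁ := by
  have hW := hasDerivAt_W r θ θ₁
  have hWpos := W_pos r θ θ₁ hr hr1
  have h := hW.sqrt (ne_of_gt hWpos)
  refine h.congr_deriv (Eq.symm ?_)
  have hs2 : Real.sin θ ^ 2 = 1 - Real.cos θ ^ 2 := Real.sin_sq θ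
  have hSpos := Sa_pos r θ θ₁ hr hr1
  have hSa : Real.sqrt (Pa r θ θ₁ ^ 2 - Qa r θ θ₁ ^ 2) = Sa r θ θ₁ := rfl
  rw [hSa]
  rw [div_eq_div_iff (ne_of_gt hSpos) (by positivity)]
  unfold Pa Qa
  ring_nf
  linear_combination (Sa r θ θ₁ * r^2 * Real.sin θ₁ * Real.cos θ₁ * 2) * hs2

lemma Sa_at_pi (r θ : ℝ) (hr : 0 < r) (hr1 : r < 1) : Sa r θ π = 1 - r * Real.cos θ := by
  unfold Sa Pa Qa
  simp [Real.cos_pi, Real.sin_pi]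
  rw [show (1 + -(r * Real.cos θ)) ^ 2 = (1 - r * Real.cos θ)^2 from by ring]
  rw [Real.sqrt_sq]
  nlinarith [Real.neg_one_le_cos θ, Real.cos_le_one θ, abs_cos_le_one θ]

lemma Sa_at_zero (r θ : ℝ) (hr : 0 < r) (hr1 : r < 1) : Sa r θ 0 = 1 + r * Real.cos θ := by
  unfold Sa Pa Qa
  simp [Real.cos_zero, Real.sin_zero]
  rw [Real.sqrt_sq]
  nlinarith [Real.neg_one_le_cos θ, Real.cos_le_one θ]


lemma cont_Sa (r θ : ℝ) : Continuous fun x => Sa r θ x := by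
  unfold Sa Pa Qa
  exact Real.continuous_sqrt.comp (by continuity)

lemma O1 : ∫ x in (0:ℝ)..π, Real.sin x = 2 := by
  rw [integral_sin]; norm_num

lemma O2 : ∫ x in (0:ℝ)..π, Real.sin x * Real.cos x = 0 := by
  have h : ∀ x : ℝ, HasDerivAt (fun y => Real.sin y ^ 2 / 2) (Real.sin x * Real.cos x) x := by
    intro x
    have := ((Real.hasDerivAt_sin x).pow 2).div_const 2
    refine this.congr_deriv (Eq.symm ?_)
    ring
  rw [intervalIntegral.integral_eq_sub_of_hasDerivAt (fun x _ => h x)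
    ((by continuity : Continuous fun x => Real.sin x * Real.cos x).intervalIntegrable 0 π)]
  simp

lemma sin_eq_zero_of_cos_neg_one (θ : ℝ) (h : Real.cos θ = -1) : Real.sin θ = 0 := by
  have h1 := Real.sin_sq θ
  rw [h] at h1
  norm_num at h1
  exact h1

lemma Sa_cos_neg_one (r θ : ℝ) (hr : 0 < r) (hr1 : r < 1) (hk : Real.cos θ = -1) (x : ℝ) :
    Sa r θ x = 1 - r * Real.cos x := by
  unfold Sa Pa Qa
  rw [hk, sin_eq_zero_of_cos_neg_one θ hk]
  rw [show (1 + r * -1 * Real.cos x)^2 - (r * 0 * Real.sin x)^2 = (1 - r * Real.cos x)^2 from by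
    ring]
  rw [Real.sqrt_sq]
  nlinarith [Real.neg_one_le_cos x, Real.cos_le_one x]


lemma O3 (r θ : ℝ) (hr : 0 < r) (hr1 : r < 1) :
    ∫ x in (0:ℝ)..π, Real.sin x / Sa r θ x = Real.log ((1+r)/(1-r)) / r := by
  have hr1' : (0:ℝ) < 1 - r := by linarith
  have hr1'' : (0:ℝ) < 1 + r := by linarith
  have hcont : Continuous fun x => Real.sin x / Sa r θ x :=
    Continuous.div (by continuity) (cont_Sa r θ)
      (fun x => ne_of_gt (Sa_pos r θ x hr hr1))
  rcases eq_or_lt_of_le (Real.neg_one_le_cos θ) with hk | hk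
  · have hk' : Real.cos θ = -1 := hk.symm
    have key : ∀ x : ℝ, HasDerivAt (fun y => (1/r) * Real.log (1 - r * Real.cos y))
        (Real.sin x / Sa r θ x) x := by
      intro x
      have hpos : 0 < 1 - r * Real.cos x := by
        nlinarith [Real.neg_one_le_cos x, Real.cos_le_one x]
      have hinner : HasDerivAt (fun y : ℝ => 1 - r * Real.cos y) (r * Real.sin x) x := by
        simpa using (((Real.hasDerivAt_cos x).const_mul r).const_sub 1)
      have := (hinner.log (ne_of_gt hpos)).const_mul (1/r)
      refine this.congr_deriv (Eq.symm ?_)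
      rw [Sa_cos_neg_one r θ hr hr1 hk' x]
      field_simp
    rw [intervalIntegral.integral_eq_sub_of_hasDerivAt (fun x _ => key x)
      (hcont.intervalIntegrable 0 π)]
    rw [Real.cos_pi, Real.cos_zero]
    rw [Real.log_div (ne_of_gt hr1'') (ne_of_gt hr1')]
    rw [show 1 - r * (-1) = 1 + r from by ring]
    field_simp
  · have hDpos := fun x => D_pos r θ x hr hr1 hk
    have key : ∀ x : ℝ, HasDerivAt
        (fun y => -(1/r) * Real.log (r * Real.cos y + Real.cos θ + Sa r θ y))
        (Real.sin x / Sa r θ x) x := by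
      intro x
      have hD : HasDerivAt (fun y => r * Real.cos y + Real.cos θ + Sa r θ y)
          (r * (-Real.sin x) + -(r * Real.sin x * (r * Real.cos x + Real.cos θ)) / Sa r θ x)
          x :=
        (((Real.hasDerivAt_cos x).const_mul r).add_const (Real.cos θ)).add
          (hasDerivAt_Sa r θ x hr hr1)
      have := (hD.log (ne_of_gt (hDpos x))).const_mul (-(1/r))
      refine this.congr_deriv (Eq.symm ?_)
      have hSpos := Sa_pos r θ x hr hr1
      have h1 : Sa r θ x ≠ 0 := ne_of_gt hSpos
      have h2 : r * Real.cos x + Real.cos θ + Sa r θ x ≠ 0 := ne_of_gt (hDpos x)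
      field_simp
      ring
    rw [intervalIntegral.integral_eq_sub_of_hasDerivAt (fun x _ => key x)
      (hcont.intervalIntegrable 0 π)]
    have a1 : r * Real.cos π + Real.cos θ + Sa r θ π = (1-r) * (1 + Real.cos θ) := by
      rw [Real.cos_pi, Sa_at_pi r θ hr hr1]; ring
    have a2 : r * Real.cos 0 + Real.cos θ + Sa r θ 0 = (1+r) * (1 + Real.cos θ) := by
      rw [Real.cos_zero, Sa_at_zero r θ hr hr1]; ring
    rw [a1, a2]
    have hck : (0:ℝ) < 1 + Real.cos θ := by linarith
    rw [Real.log_mul (ne_of_gt hr1') (ne_of_gt hck),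
      Real.log_mul (ne_of_gt hr1'') (ne_of_gt hck),
      Real.log_div (ne_of_gt hr1'') (ne_of_gt hr1')]
    field_simp
    ring

lemma O4 (r θ : ℝ) (hr : 0 < r) (hr1 : r < 1) :
    ∫ x in (0:ℝ)..π, Real.sin x * Real.cos x / Sa r θ x
      = Real.cos θ * (2*r - Real.log ((1+r)/(1-r))) / r^2 := by
  have hr1' : (0:ℝ) < 1 - r := by linarith
  have hr1'' : (0:ℝ) < 1 + r := by linarith
  have hcont : Continuous fun x => Real.sin x * Real.cos x / Sa r θ x :=
    Continuous.div (by continuity) (cont_Sa r θ)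
      (fun x => ne_of_gt (Sa_pos r θ x hr hr1))
  rcases eq_or_lt_of_le (Real.neg_one_le_cos θ) with hk | hk
  · have hk' : Real.cos θ = -1 := hk.symm
    have key : ∀ x : ℝ, HasDerivAt
        (fun y => (1/r^2) * Real.log (1 - r * Real.cos y) + Real.cos y / r)
        (Real.sin x * Real.cos x / Sa r θ x) x := by
      intro x
      have hpos : 0 < 1 - r * Real.cos x := by
        nlinarith [Real.neg_one_le_cos x, Real.cos_le_one x]
      have hinner : HasDerivAt (fun y : ℝ => 1 - r * Real.cos y) (r * Real.sin x) x := by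
        simpa using (((Real.hasDerivAt_cos x).const_mul r).const_sub 1)
      have := ((hinner.log (ne_of_gt hpos)).const_mul (1/r^2)).add
        ((Real.hasDerivAt_cos x).div_const r)
      refine this.congr_deriv (Eq.symm ?_)
      rw [Sa_cos_neg_one r θ hr hr1 hk' x]
      have hne : 1 - Real.cos x * r ≠ 0 := by rw [mul_comm]; exact ne_of_gt hpos
      field_simp
      ring
    rw [intervalIntegral.integral_eq_sub_of_hasDerivAt (fun x _ => key x)
      (hcont.intervalIntegrable 0 π)]
    rw [Real.cos_pi, Real.cos_zero, hk']
    rw [Real.log_div (ne_of_gt hr1'') (ne_of_gt hr1')]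
    rw [show 1 - r * (-1) = 1 + r from by ring]
    field_simp
    ring
  · have hDpos := fun x => D_pos r θ x hr hr1 hk
    have key : ∀ x : ℝ, HasDerivAt
        (fun y => -(Sa r θ y)/r^2
          + (Real.cos θ/r^2) * Real.log (r * Real.cos y + Real.cos θ + Sa r θ y))
        (Real.sin x * Real.cos x / Sa r θ x) x := by
      intro x
      have hD : HasDerivAt (fun y => r * Real.cos y + Real.cos θ + Sa r θ y)
          (r * (-Real.sin x) + -(r * Real.sin x * (r * Real.cos x + Real.cos θ)) / Sa r θ x)
          x :=
        (((Real.hasDerivAt_cos x).const_mul r).add_const (Real.cos θ)).add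
          (hasDerivAt_Sa r θ x hr hr1)
      have hSa := hasDerivAt_Sa r θ x hr hr1
      have := ((hSa.neg).div_const (r^2)).add
        ((hD.log (ne_of_gt (hDpos x))).const_mul (Real.cos θ/r^2))
      refine this.congr_deriv (Eq.symm ?_)
      have hSpos := Sa_pos r θ x hr hr1
      have h1 : Sa r θ x ≠ 0 := ne_of_gt hSpos
      have h2 : Real.cos x * r + Real.cos θ + Sa r θ x ≠ 0 := by rw [mul_comm]; exact ne_of_gt (hDpos x)
      field_simp
      ring
    rw [intervalIntegral.integral_eq_sub_of_hasDerivAt (fun x _ => key x)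
      (hcont.intervalIntegrable 0 π)]
    have a1 : r * Real.cos π + Real.cos θ + Sa r θ π = (1-r) * (1 + Real.cos θ) := by
      rw [Real.cos_pi, Sa_at_pi r θ hr hr1]; ring
    have a2 : r * Real.cos 0 + Real.cos θ + Sa r θ 0 = (1+r) * (1 + Real.cos θ) := by
      rw [Real.cos_zero, Sa_at_zero r θ hr hr1]; ring
    rw [a1, a2, Sa_at_pi r θ hr hr1, Sa_at_zero r θ hr hr1]
    have hck : (0:ℝ) < 1 + Real.cos θ := by linarith
    rw [Real.log_mul (ne_of_gt hr1') (ne_of_gt hck),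
      Real.log_mul (ne_of_gt hr1'') (ne_of_gt hck),
      Real.log_div (ne_of_gt hr1'') (ne_of_gt hr1')]
    field_simp
    ring


lemma husimi_eq (r θ φ θ₁ φ₁ : ℝ) :
    husimiQ r θ φ θ₁ φ₁ = (1/2) * (1 + r * Af θ φ θ₁ φ₁) := by
  unfold husimiQ Af; ring

lemma deriv_log_husimi (r θ φ θ₁ φ₁ : ℝ) (hr : 0 < r) (hr1 : r < 1) :
    deriv (fun r' => Real.log (husimiQ r' θ φ θ₁ φ₁)) r
      = Af θ φ θ₁ φ₁ / (1 + r * Af θ φ θ₁ φ₁) := by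
  have hpos := one_add_rAf_pos r θ φ θ₁ φ₁ hr hr1
  have hQpos : 0 < husimiQ r θ φ θ₁ φ₁ := by rw [husimi_eq]; linarith
  have hAf : HasDerivAt (fun r' => husimiQ r' θ φ θ₁ φ₁) (Af θ φ θ₁ φ₁ / 2) r := by
    unfold husimiQ
    have h1 : HasDerivAt (fun r' : ℝ => r' * Real.cos θ₁ * Real.cos θ)
        (Real.cos θ₁ * Real.cos θ) r := by
      simpa [mul_assoc] using (hasDerivAt_id r).mul_const (Real.cos θ₁ * Real.cos θ)
    have h2 : HasDerivAt (fun r' : ℝ => r' * Real.cos (φ₁ - φ) * Real.sin θ₁ * Real.sin θ)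
        (Real.cos (φ₁ - φ) * Real.sin θ₁ * Real.sin θ) r := by
      simpa [mul_assoc] using
        (hasDerivAt_id r).mul_const (Real.cos (φ₁ - φ) * Real.sin θ₁ * Real.sin θ)
    have := ((h1.const_add 1).add h2).const_mul (1/2 : ℝ)
    refine this.congr_deriv (Eq.symm ?_)
    unfold Af; ring
  rw [(hAf.log (ne_of_gt hQpos)).deriv]
  rw [husimi_eq]
  have h3 : (1 + r * Af θ φ θ₁ φ₁) ≠ 0 := ne_of_gt hpos
  field_simp

lemma outer_diag (r θ e : ℝ) (hr : 0 < r) (hr1 : r < 1) :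
    ∫ x in (0:ℝ)..π, (2*π/r - (2*π/r)/Sa r θ x) * ((1 + e * Real.cos x) * (Real.sin x/(2*π))/2)
      = 1/(2*r^3) * (2*r + Real.log ((1-r)/(1+r))) * (r - e * Real.cos θ) := by
  have hr1' : (0:ℝ) < 1 - r := by linarith
  have hr1'' : (0:ℝ) < 1 + r := by linarith
  have hπ := Real.pi_ne_zero
  have hSne : ∀ x, Sa r θ x ≠ 0 := fun x => ne_of_gt (Sa_pos r θ x hr hr1)
  have key : ∀ x : ℝ,
      (2*π/r - (2*π/r)/Sa r θ x) * ((1 + e * Real.cos x) * (Real.sin x/(2*π))/2)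
      = (1/(2*r)) * Real.sin x + (e/(2*r)) * (Real.sin x * Real.cos x)
        - (1/(2*r)) * (Real.sin x / Sa r θ x)
        - (e/(2*r)) * (Real.sin x * Real.cos x / Sa r θ x) := by
    intro x
    have := hSne x
    field_simp
    ring
  rw [intervalIntegral.integral_congr (fun x _ => key x)]
  have c1 : Continuous fun x : ℝ => (1/(2*r)) * Real.sin x := by continuity
  have c2 : Continuous fun x : ℝ => (e/(2*r)) * (Real.sin x * Real.cos x) := by continuity
  have c3 : Continuous fun x : ℝ => (1/(2*r)) * (Real.sin x / Sa r θ x) :=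
    continuous_const.mul (Continuous.div (by continuity) (cont_Sa r θ) (fun x => hSne x))
  have c4 : Continuous fun x : ℝ => (e/(2*r)) * (Real.sin x * Real.cos x / Sa r θ x) :=
    continuous_const.mul (Continuous.div (by continuity) (cont_Sa r θ) (fun x => hSne x))
  erw [intervalIntegral.integral_sub (((c1.add c2).sub c3).intervalIntegrable 0 π)
    (c4.intervalIntegrable 0 π),
    intervalIntegral.integral_sub ((c1.add c2).intervalIntegrable 0 π)
    (c3.intervalIntegrable 0 π),
    intervalIntegral.integral_add (c1.intervalIntegrable 0 π) (c2.intervalIntegrable 0 π)]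
  rw [intervalIntegral.integral_const_mul, intervalIntegral.integral_const_mul,
    intervalIntegral.integral_const_mul, intervalIntegral.integral_const_mul]
  rw [O1, O2, O3 r θ hr hr1, O4 r θ hr hr1]
  have hL : Real.log ((1-r)/(1+r)) = - Real.log ((1+r)/(1-r)) := by
    rw [← Real.log_inv, inv_div]
  rw [hL]
  field_simp
  ring


lemma cont_g (r θ φ x : ℝ) (hr : 0 < r) (hr1 : r < 1) :
    Continuous fun φ₁ => Af θ φ x φ₁ / (1 + r * Af θ φ x φ₁) := by
  apply Continuous.div
  · unfold Af; continuity
  · unfold Af; continuity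
  · exact fun φ₁ => ne_of_gt (one_add_rAf_pos r θ φ x φ₁ hr hr1)

lemma diag_case (r θ φ : ℝ) (hr : 0 < r) (hr1 : r < 1) (e : ℝ) :
    (∫ θ₁ in (0:ℝ)..π, ∫ φ₁ in (0:ℝ)..(2 * π),
        ((deriv (fun r' => Real.log (husimiQ r' θ φ θ₁ φ₁)) r : ℝ) : ℂ) *
          (((1 + e * Real.cos θ₁)/2 : ℝ) : ℂ) * ((Real.sin θ₁ / (2 * π) : ℝ) : ℂ))
      = ((1/(2*r^3) * (2*r + Real.log ((1-r)/(1+r))) * (r - e * Real.cos θ) : ℝ) : ℂ) := by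
  have hinner : ∀ x : ℝ, (∫ φ₁ in (0:ℝ)..(2 * π),
      ((deriv (fun r' => Real.log (husimiQ r' θ φ x φ₁)) r : ℝ) : ℂ) *
        (((1 + e * Real.cos x)/2 : ℝ) : ℂ) * ((Real.sin x / (2 * π) : ℝ) : ℂ))
      = (((2*π/r - (2*π/r)/Sa r θ x) * ((1 + e * Real.cos x) * (Real.sin x/(2*π))/2) : ℝ) : ℂ) := by
    intro x
    have hcongr : ∀ φ₁ : ℝ,
        ((deriv (fun r' => Real.log (husimiQ r' θ φ x φ₁)) r : ℝ) : ℂ) *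
          (((1 + e * Real.cos x)/2 : ℝ) : ℂ) * ((Real.sin x / (2 * π) : ℝ) : ℂ)
        = (((Af θ φ x φ₁ / (1 + r * Af θ φ x φ₁)) *
            ((1 + e * Real.cos x) * (Real.sin x/(2*π))/2) : ℝ) : ℂ) := by
      intro φ₁
      rw [deriv_log_husimi r θ φ x φ₁ hr hr1]
      push_cast
      ring
    rw [intervalIntegral.integral_congr (fun φ₁ _ => hcongr φ₁)]
    rw [intervalIntegral.integral_ofReal]
    norm_cast
    rw [intervalIntegral.integral_mul_const, inner0 r θ φ x hr hr1]
  rw [intervalIntegral.integral_congr (fun x _ => hinner x)]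
  rw [intervalIntegral.integral_ofReal]
  rw [outer_diag r θ e hr hr1]


lemma exp_neg_I_real (x : ℝ) :
    Complex.exp (-Complex.I * x) = ((Real.cos x : ℝ) : ℂ) - Complex.I * ((Real.sin x : ℝ) : ℂ) := by
  rw [show -Complex.I * (x:ℂ) = ((-x : ℝ) : ℂ) * Complex.I from by push_cast; ring]
  rw [Complex.exp_mul_I]
  rw [← Complex.ofReal_cos, ← Complex.ofReal_sin, Real.cos_neg, Real.sin_neg]
  push_cast
  ring

lemma exp_I_real (x : ℝ) :
    Complex.exp (Complex.I * x) = ((Real.cos x : ℝ) : ℂ) + Complex.I * ((Real.sin x : ℝ) : ℂ) := by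
  rw [show Complex.I * (x:ℂ) = ((x : ℝ) : ℂ) * Complex.I from by push_cast; ring]
  rw [Complex.exp_mul_I]
  rw [← Complex.ofReal_cos, ← Complex.ofReal_sin]
  push_cast
  ring

lemma PaSa_ne (r θ x : ℝ) (hr : 0 < r) (hr1 : r < 1) : Pa r θ x + Sa r θ x ≠ 0 := by
  have h1 := Sa_pos r θ x hr hr1
  have h2 : 0 < Pa r θ x := lt_of_le_of_lt (abs_nonneg _) (Qa_lt_Pa' r θ x hr hr1)
  positivity

lemma offdiag_outer (r θ : ℝ) (hr : 0 < r) (hr1 : r < 1) (hs : Real.sin θ ≠ 0) :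
    ∫ x in (0:ℝ)..π,
        (3 * Real.sin x^2/(4*π)) * (2*π*Qa r θ x/(r * Sa r θ x * (Pa r θ x + Sa r θ x)))
      = 1/(2*r^3) * (2*r + Real.log ((1-r)/(1+r))) * (-3) * Real.sin θ := by
  have hπ := Real.pi_ne_zero
  have hSne : ∀ x, Sa r θ x ≠ 0 := fun x => ne_of_gt (Sa_pos r θ x hr hr1)
  have hPS := fun x => PaSa_ne r θ x hr hr1
  have key : ∀ x : ℝ,
      (3 * Real.sin x^2/(4*π)) * (2*π*Qa r θ x/(r * Sa r θ x * (Pa r θ x + Sa r θ x)))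
      = (3/(2*r^2*Real.sin θ)) * (Real.sin x / Sa r θ x)
        + (3*Real.cos θ/(2*r*Real.sin θ)) * (Real.sin x * Real.cos x / Sa r θ x)
        - (3/(2*r^2*Real.sin θ)) * Real.sin x := by
    intro x
    have hSq : Pa r θ x ^ 2 - Sa r θ x ^ 2 = Qa r θ x ^ 2 := by
      have := Sa_sq r θ x hr hr1; linarith
    have h1 := hSne x
    have h2 := hPS x
    have hQdef : Qa r θ x = r * Real.sin θ * Real.sin x := rfl
    have hPdef : Pa r θ x = 1 + r * Real.cos θ * Real.cos x := rfl
    field_simp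
    rw [hQdef, hPdef] at hSq ⊢
    linear_combination (-4 * Real.sin x) * hSq
  rw [intervalIntegral.integral_congr (fun x _ => key x)]
  have c1 : Continuous fun x : ℝ => (3/(2*r^2*Real.sin θ)) * (Real.sin x / Sa r θ x) :=
    continuous_const.mul (Continuous.div (by continuity) (cont_Sa r θ) hSne)
  have c2 : Continuous fun x : ℝ =>
      (3*Real.cos θ/(2*r*Real.sin θ)) * (Real.sin x * Real.cos x / Sa r θ x) :=
    continuous_const.mul (Continuous.div (by continuity) (cont_Sa r θ) hSne)
  have c3 : Continuous fun x : ℝ => (3/(2*r^2*Real.sin θ)) * Real.sin x := by continuity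
  erw [intervalIntegral.integral_sub ((c1.add c2).intervalIntegrable 0 π)
    (c3.intervalIntegrable 0 π),
    intervalIntegral.integral_add (c1.intervalIntegrable 0 π) (c2.intervalIntegrable 0 π),
    intervalIntegral.integral_const_mul, intervalIntegral.integral_const_mul,
    intervalIntegral.integral_const_mul, O1, O3 r θ hr hr1, O4 r θ hr hr1]
  have hL : Real.log ((1-r)/(1+r)) = - Real.log ((1+r)/(1-r)) := by
    rw [← Real.log_inv, inv_div]
  rw [hL]
  have hsq := Real.sin_sq θ
  set M := Real.log ((1+r)/(1-r)) with hM
  field_simp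
  linear_combination (2*r - M) * hsq


lemma offdiag01 (r θ φ : ℝ) (hr : 0 < r) (hr1 : r < 1) :
    (∫ θ₁ in (0:ℝ)..π, ∫ φ₁ in (0:ℝ)..(2 * π),
        ((deriv (fun r' => Real.log (husimiQ r' θ φ θ₁ φ₁)) r : ℝ) : ℂ) *
          ((3/2 : ℂ) * Complex.exp (-Complex.I * φ₁) * ((Real.sin θ₁ : ℝ) : ℂ)) *
          ((Real.sin θ₁ / (2 * π) : ℝ) : ℂ))
      = ((1 / (2 * r ^ 3) * (2 * r + Real.log ((1 - r) / (1 + r))) : ℝ) : ℂ)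
          * (-3) * Complex.exp (-Complex.I * φ) * ((Real.sin θ : ℝ) : ℂ) := by
  have hinner : ∀ x : ℝ, (∫ φ₁ in (0:ℝ)..(2 * π),
      ((deriv (fun r' => Real.log (husimiQ r' θ φ x φ₁)) r : ℝ) : ℂ) *
        ((3/2 : ℂ) * Complex.exp (-Complex.I * φ₁) * ((Real.sin x : ℝ) : ℂ)) *
        ((Real.sin x / (2 * π) : ℝ) : ℂ))
      = Complex.exp (-Complex.I * φ) *
          (((3 * Real.sin x^2/(4*π)) *
            (2*π*Qa r θ x/(r * Sa r θ x * (Pa r θ x + Sa r θ x))) : ℝ) : ℂ) := by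
    intro x
    set w : ℝ := 3 * Real.sin x^2/(4*π) with hw
    have hgc := cont_g r θ φ x hr hr1
    have hcongr : ∀ φ₁ : ℝ,
        ((deriv (fun r' => Real.log (husimiQ r' θ φ x φ₁)) r : ℝ) : ℂ) *
          ((3/2 : ℂ) * Complex.exp (-Complex.I * φ₁) * ((Real.sin x : ℝ) : ℂ)) *
          ((Real.sin x / (2 * π) : ℝ) : ℂ)
        = Complex.exp (-Complex.I * φ) *
            ((((Af θ φ x φ₁ / (1 + r * Af θ φ x φ₁) * Real.cos (φ₁ - φ)) * w : ℝ) : ℂ)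
              - Complex.I *
                (((Af θ φ x φ₁ / (1 + r * Af θ φ x φ₁) * Real.sin (φ₁ - φ)) * w : ℝ) : ℂ)) := by
      intro φ₁
      rw [deriv_log_husimi r θ φ x φ₁ hr hr1]
      have hexp : Complex.exp (-Complex.I * φ₁)
          = Complex.exp (-Complex.I * φ) *
            (((Real.cos (φ₁ - φ) : ℝ) : ℂ) - Complex.I * ((Real.sin (φ₁ - φ) : ℝ) : ℂ)) := by
        rw [← exp_neg_I_real (φ₁ - φ), ← Complex.exp_add]
        congr 1
        push_cast
        ring
      rw [hexp, hw]
      push_cast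
      ring
    rw [intervalIntegral.integral_congr (fun φ₁ _ => hcongr φ₁)]
    rw [intervalIntegral.integral_const_mul]
    have i1 : IntervalIntegrable
        (fun φ₁ => (((Af θ φ x φ₁ / (1 + r * Af θ φ x φ₁) * Real.cos (φ₁ - φ)) * w : ℝ) : ℂ))
        MeasureTheory.volume 0 (2*π) := by
      apply Continuous.intervalIntegrable
      exact Complex.continuous_ofReal.comp ((hgc.mul
        (Real.continuous_cos.comp (continuous_id.sub continuous_const))).mul continuous_const)
    have i2 : IntervalIntegrable
        (fun φ₁ => Complex.I *
          (((Af θ φ x φ₁ / (1 + r * Af θ φ x φ₁) * Real.sin (φ₁ - φ)) * w : ℝ) : ℂ))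
        MeasureTheory.volume 0 (2*π) := by
      apply Continuous.intervalIntegrable
      exact continuous_const.mul
        (Complex.continuous_ofReal.comp ((hgc.mul
          (Real.continuous_sin.comp (continuous_id.sub continuous_const))).mul continuous_const))
    rw [intervalIntegral.integral_sub i1 i2, intervalIntegral.integral_const_mul]
    rw [intervalIntegral.integral_ofReal, intervalIntegral.integral_ofReal]
    rw [intervalIntegral.integral_mul_const, intervalIntegral.integral_mul_const]
    rw [innerC r θ φ x hr hr1, innerS r θ φ x hr hr1]
    push_cast
    ring
  rw [intervalIntegral.integral_congr (fun x _ => hinner x)]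
  rw [intervalIntegral.integral_const_mul, intervalIntegral.integral_ofReal]
  by_cases hs : Real.sin θ = 0
  · have hzero : ∀ x : ℝ, (3 * Real.sin x^2/(4*π)) *
        (2*π*Qa r θ x/(r * Sa r θ x * (Pa r θ x + Sa r θ x))) = 0 := by
      intro x
      rw [show Qa r θ x = r * Real.sin θ * Real.sin x from rfl, hs]
      simp
    rw [intervalIntegral.integral_congr (fun x _ => hzero x)]
    simp [hs]
  · rw [offdiag_outer r θ hr hr1 hs]
    push_cast
    ring

lemma offdiag10 (r θ φ : ℝ) (hr : 0 < r) (hr1 : r < 1) :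
    (∫ θ₁ in (0:ℝ)..π, ∫ φ₁ in (0:ℝ)..(2 * π),
        ((deriv (fun r' => Real.log (husimiQ r' θ φ θ₁ φ₁)) r : ℝ) : ℂ) *
          ((3/2 : ℂ) * Complex.exp (Complex.I * φ₁) * ((Real.sin θ₁ : ℝ) : ℂ)) *
          ((Real.sin θ₁ / (2 * π) : ℝ) : ℂ))
      = ((1 / (2 * r ^ 3) * (2 * r + Real.log ((1 - r) / (1 + r))) : ℝ) : ℂ)
          * (-3) * Complex.exp (Complex.I * φ) * ((Real.sin θ : ℝ) : ℂ) := by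
  have hinner : ∀ x : ℝ, (∫ φ₁ in (0:ℝ)..(2 * π),
      ((deriv (fun r' => Real.log (husimiQ r' θ φ x φ₁)) r : ℝ) : ℂ) *
        ((3/2 : ℂ) * Complex.exp (Complex.I * φ₁) * ((Real.sin x : ℝ) : ℂ)) *
        ((Real.sin x / (2 * π) : ℝ) : ℂ))
      = Complex.exp (Complex.I * φ) *
          (((3 * Real.sin x^2/(4*π)) *
            (2*π*Qa r θ x/(r * Sa r θ x * (Pa r θ x + Sa r θ x))) : ℝ) : ℂ) := by
    intro x
    set w : ℝ := 3 * Real.sin x^2/(4*π) with hw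
    have hgc := cont_g r θ φ x hr hr1
    have hcongr : ∀ φ₁ : ℝ,
        ((deriv (fun r' => Real.log (husimiQ r' θ φ x φ₁)) r : ℝ) : ℂ) *
          ((3/2 : ℂ) * Complex.exp (Complex.I * φ₁) * ((Real.sin x : ℝ) : ℂ)) *
          ((Real.sin x / (2 * π) : ℝ) : ℂ)
        = Complex.exp (Complex.I * φ) *
            ((((Af θ φ x φ₁ / (1 + r * Af θ φ x φ₁) * Real.cos (φ₁ - φ)) * w : ℝ) : ℂ)
              + Complex.I *
                (((Af θ φ x φ₁ / (1 + r * Af θ φ x φ₁) * Real.sin (φ₁ - φ)) * w : ℝ) : ℂ)) := by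
      intro φ₁
      rw [deriv_log_husimi r θ φ x φ₁ hr hr1]
      have hexp : Complex.exp (Complex.I * φ₁)
          = Complex.exp (Complex.I * φ) *
            (((Real.cos (φ₁ - φ) : ℝ) : ℂ) + Complex.I * ((Real.sin (φ₁ - φ) : ℝ) : ℂ)) := by
        rw [← exp_I_real (φ₁ - φ), ← Complex.exp_add]
        congr 1
        push_cast
        ring
      rw [hexp, hw]
      push_cast
      ring
    rw [intervalIntegral.integral_congr (fun φ₁ _ => hcongr φ₁)]
    rw [intervalIntegral.integral_const_mul]
    have i1 : IntervalIntegrable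
        (fun φ₁ => (((Af θ φ x φ₁ / (1 + r * Af θ φ x φ₁) * Real.cos (φ₁ - φ)) * w : ℝ) : ℂ))
        MeasureTheory.volume 0 (2*π) := by
      apply Continuous.intervalIntegrable
      exact Complex.continuous_ofReal.comp ((hgc.mul
        (Real.continuous_cos.comp (continuous_id.sub continuous_const))).mul continuous_const)
    have i2 : IntervalIntegrable
        (fun φ₁ => Complex.I *
          (((Af θ φ x φ₁ / (1 + r * Af θ φ x φ₁) * Real.sin (φ₁ - φ)) * w : ℝ) : ℂ))
        MeasureTheory.volume 0 (2*π) := by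
      apply Continuous.intervalIntegrable
      exact continuous_const.mul
        (Complex.continuous_ofReal.comp ((hgc.mul
          (Real.continuous_sin.comp (continuous_id.sub continuous_const))).mul continuous_const))
    rw [intervalIntegral.integral_add i1 i2, intervalIntegral.integral_const_mul]
    rw [intervalIntegral.integral_ofReal, intervalIntegral.integral_ofReal]
    rw [intervalIntegral.integral_mul_const, intervalIntegral.integral_mul_const]
    rw [innerC r θ φ x hr hr1, innerS r θ φ x hr hr1]
    push_cast
    ring
  rw [intervalIntegral.integral_congr (fun x _ => hinner x)]
  rw [intervalIntegral.integral_const_mul, intervalIntegral.integral_ofReal]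
  by_cases hs : Real.sin θ = 0
  · have hzero : ∀ x : ℝ, (3 * Real.sin x^2/(4*π)) *
        (2*π*Qa r θ x/(r * Sa r θ x * (Pa r θ x + Sa r θ x))) = 0 := by
      intro x
      rw [show Qa r θ x = r * Real.sin θ * Real.sin x from rfl, hs]
      simp
    rw [intervalIntegral.integral_congr (fun x _ => hzero x)]
    simp [hs]
  · rw [offdiag_outer r θ hr hr1 hs]
    push_cast
    ring

theorem L1_integral_formula (r θ φ : ℝ) (hr : 0 < r) (hr1 : r < 1) (i j : Fin 2) :
    (∫ θ₁ in (0:ℝ)..π, ∫ φ₁ in (0:ℝ)..(2 * π),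
        ((deriv (fun r' => Real.log (husimiQ r' θ φ θ₁ φ₁)) r : ℝ) : ℂ) *
          swKernelOne θ₁ φ₁ i j * ((Real.sin θ₁ / (2 * π) : ℝ) : ℂ)) =
      L1 r θ φ i j := by
  fin_cases i <;> fin_cases j <;> simp only [Fin.mk_zero, Fin.mk_one]
  · have hker : ∀ a b : ℝ, swKernelOne a b 0 0 = (((1 + 3 * Real.cos a)/2 : ℝ) : ℂ) := by
      intro a b; simp [swKernelOne]; push_cast; ring
    simp only [hker]
    rw [diag_case r θ φ hr hr1 3]
    simp [L1]
  · have hker : ∀ a b : ℝ, swKernelOne a b 0 1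
        = (3/2 : ℂ) * Complex.exp (-Complex.I * b) * ((Real.sin a : ℝ) : ℂ) := by
      intro a b; simp [swKernelOne]; push_cast; ring
    simp only [hker]
    rw [offdiag01 r θ φ hr hr1]
    simp [L1]
    push_cast
    ring
  · have hker : ∀ a b : ℝ, swKernelOne a b 1 0
        = (3/2 : ℂ) * Complex.exp (Complex.I * b) * ((Real.sin a : ℝ) : ℂ) := by
      intro a b; simp [swKernelOne]; push_cast; ring
    simp only [hker]
    rw [offdiag10 r θ φ hr hr1]
    simp [L1]
    push_cast
    ring
  · have hker : ∀ a b : ℝ, swKernelOne a b 1 1 = (((1 + (-3) * Real.cos a)/2 : ℝ) : ℂ) := by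
      intro a b; simp [swKernelOne]; push_cast; ring
    simp only [hker]
    rw [diag_case r θ φ hr hr1 (-3)]
    simp [L1]
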